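/- Let G : ℝ → ℝ satisfy the functional equation (FE), and let I ⊆ ℝ be an open interval on which G does not vanish (G(x) ≠ 0 for all x ∈ I). Then there exists a constant c ∈ ℝ such that G(−2x) + 2G(x) = c·G(x)² for all x ∈ I. -/
import Mathlib


open Real

/-- A function `G : ℝ → ℝ` satisfies the functional equation (FE) if it is
differentiable and for all `x, y, z` with `x + y + z = 0`,
`G'(x)(G(y)+G(z)) + G'(y)(G(z)+G(x)) + G'(z)(G(x)+G(y)) = 0`. -/
def FE (G : ℝ → ℝ) : Prop :=
  Differentiable ℝ G ∧ ∀ x y z : ℝ, x + y + z = 0 →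
    deriv G x * (G y + G z) + deriv G y * (G z + G x) + deriv G z * (G x + G y) = 0

theorem stmt6 (G : ℝ → ℝ) (hFE : FE G) (I : Set ℝ)
    (hIopen : IsOpen I) (hIconn : I.OrdConnected)
    (hne : ∀ x ∈ I, G x ≠ 0) :
    ∃ c : ℝ, ∀ x ∈ I, G (-2 * x) + 2 * G x = c * (G x) ^ 2 := by
  obtain ⟨hG, hfe⟩ := hFE
  rcases I.eq_empty_or_nonempty with h | ⟨x₀, hx₀⟩
  · exact ⟨0, by simp [h]⟩
  set f : ℝ → ℝ := fun x => (G (-2 * x) + 2 * G x) / (G x) ^ 2 with hf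
  have key : ∀ x : ℝ, deriv G x * (G x + G (-2 * x)) + deriv G (-2 * x) * G x = 0 := by
    intro x
    have := hfe x x (-2 * x) (by ring)
    linarith
  have hderiv : ∀ x ∈ I, HasDerivAt f 0 x := by
    intro x hx
    have hN : HasDerivAt (fun x => G (-2 * x) + 2 * G x)
        (deriv G (-2 * x) * (-2) + 2 * deriv G x) x := by
      have h1 : HasDerivAt (fun x : ℝ => -2 * x) (-2) x := by
        simpa using (hasDerivAt_id x).const_mul (-2)
      exact (((hG (-2 * x)).hasDerivAt.comp x h1)).add (((hG x).hasDerivAt).const_mul 2)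
    have hD : HasDerivAt (fun x => (G x) ^ 2) (2 * G x ^ 1 * deriv G x) x :=
      (hG x).hasDerivAt.pow 2
    have hne' : (G x) ^ 2 ≠ 0 := pow_ne_zero 2 (hne x hx)
    have hdiv := hN.div hD hne'
    have hval : ((deriv G (-2 * x) * (-2) + 2 * deriv G x) * G x ^ 2 -
        (G (-2 * x) + 2 * G x) * (2 * G x ^ 1 * deriv G x)) / (G x ^ 2) ^ 2 = 0 := by
      rw [div_eq_zero_iff]; left
      linear_combination (-2 * G x) * key x
    rwa [hval] at hdiv
  have hconv : Convex ℝ I := hIconn.convex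
  have hdiffOn : DifferentiableOn ℝ f I := fun x hx => (hderiv x hx).differentiableAt.differentiableWithinAt
  have hconst : ∀ x ∈ I, f x = f x₀ := by
    intro x hx
    apply hconv.is_const_of_fderivWithin_eq_zero hdiffOn _ hx hx₀
    intro z hz
    rw [fderivWithin_of_isOpen hIopen hz, (hderiv z hz).hasFDerivAt.fderiv]
    ext
    simp
  refine ⟨f x₀, fun x hx => ?_⟩
  rw [← hconst x hx, hf]
  field_simp [hne x hx]
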